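/- Let k be a field and x, y ∈ k² with ω(x,y) = 1. For every λ ∈ kˣ there is a unique pair (x₁, y₁) ∈ k² × k² satisfying y₁ = λ·x₁, ω(x₁, x) = 1 and ω(y₁, y) = 1, namely x₁ = λ⁻¹·x − y and y₁ = x − λ·y. Consequently, the map λ ↦ (λ⁻¹·x − y, x − λ·y) is a bijection from kˣ onto the set Z_{x,y} = {(x₁, y₁) ∈ k² × k² : there exists λ ∈ kˣ with y₁ = λ·x₁, and ω(x₁, x) = 1, ω(y₁, y) = 1}. (This is the computation in the proof of the paper's Proposition on Φ_{w,w} f*(𝓛) for G = SL₂: for (x,y) off the variety Δ̃, the restriction of f to Z_{x,y} is an isomorphism onto 𝔾_m.) -/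

import Mathlib

/-- The standard symplectic form on `k²`: `ω(x,y) = x₁y₂ − x₂y₁`. -/
def sympForm {k : Type*} [Field k] (x y : Fin 2 → k) : k :=
  x 0 * y 1 - x 1 * y 0

/-- Let `ω(x,y) = 1`. For every `λ ∈ kˣ` there is a unique pair `(x₁,y₁)`
with `y₁ = λ·x₁`, `ω(x₁,x) = 1` and `ω(y₁,y) = 1`, namely
`x₁ = λ⁻¹·x − y`, `y₁ = x − λ·y`; consequently
`λ ↦ (λ⁻¹·x − y, x − λ·y)` is a bijection from `kˣ` onto
`Z_{x,y} = {(x₁,y₁) : ∃ λ ∈ kˣ, y₁ = λ·x₁, ω(x₁,x) = 1, ω(y₁,y) = 1}`. -/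
theorem off_diagonal_fiber_is_Gm {k : Type*} [Field k]
    (x y : Fin 2 → k) (hxy : sympForm x y = 1) :
    (∀ l : kˣ, ∀ p : (Fin 2 → k) × (Fin 2 → k),
      (p.2 = (l : k) • p.1 ∧ sympForm p.1 x = 1 ∧ sympForm p.2 y = 1) ↔
        p = (((l⁻¹ : kˣ) : k) • x - y, x - (l : k) • y)) ∧
    Set.BijOn (fun l : kˣ => ((((l⁻¹ : kˣ) : k) • x - y, x - (l : k) • y) :
        (Fin 2 → k) × (Fin 2 → k)))
      Set.univ
      {p : (Fin 2 → k) × (Fin 2 → k) | ∃ l : kˣ,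
        p.2 = (l : k) • p.1 ∧ sympForm p.1 x = 1 ∧ sympForm p.2 y = 1} := by
  unfold sympForm at hxy
  have key : ∀ l : kˣ, ∀ p : (Fin 2 → k) × (Fin 2 → k),
      (p.2 = (l : k) • p.1 ∧ sympForm p.1 x = 1 ∧ sympForm p.2 y = 1) ↔
        p = (((l⁻¹ : kˣ) : k) • x - y, x - (l : k) • y) := by
    intro l p
    have hli : (l : k) * ((l⁻¹ : kˣ) : k) = 1 := by exact_mod_cast l.mul_inv
    constructor
    · rintro ⟨h1, h2, h3⟩
      unfold sympForm at h2 h3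
      have e0 : p.2 0 = l * p.1 0 := by rw [h1]; simp
      have e1 : p.2 1 = l * p.1 1 := by rw [h1]; simp
      have hw2x : p.2 0 * x 1 - p.2 1 * x 0 = (l : k) := by
        linear_combination x 1 * e0 - x 0 * e1 + (l : k) * h2
      have c0 : p.2 0 = x 0 - (l : k) * y 0 := by
        linear_combination (-(p.2 0)) * hxy + x 0 * h3 - y 0 * hw2x
      have c1 : p.2 1 = x 1 - (l : k) * y 1 := by
        linear_combination (-(p.2 1)) * hxy + x 1 * h3 - y 1 * hw2x
      have hc2 : p.2 = x - (l : k) • y := by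
        funext i
        fin_cases i <;>
          simp only [Pi.sub_apply, Pi.smul_apply, smul_eq_mul]
        · exact c0
        · exact c1
      have hc1 : p.1 = ((l⁻¹ : kˣ) : k) • x - y := by
        have : p.1 = ((l⁻¹ : kˣ) : k) • p.2 := by
          rw [h1]; funext i; simp only [Pi.smul_apply, smul_eq_mul]
          linear_combination (- (p.1 i)) * hli
        rw [this, hc2]
        funext i
        simp only [Pi.smul_apply, Pi.sub_apply, smul_eq_mul]
        linear_combination (- (y i)) * hli
      exact Prod.ext hc1 hc2
    · rintro rfl
      refine ⟨?_, ?_, ?_⟩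
      · funext i
        simp only [Pi.smul_apply, Pi.sub_apply, smul_eq_mul]
        linear_combination (- (x i)) * hli
      · unfold sympForm
        simp only [Pi.sub_apply, Pi.smul_apply, smul_eq_mul]
        linear_combination hxy
      · unfold sympForm
        simp only [Pi.sub_apply, Pi.smul_apply, smul_eq_mul]
        linear_combination hxy
  refine ⟨key, ?_, ?_, ?_⟩
  · intro l _
    exact ⟨l, (key l _).mpr rfl⟩
  · intro l _ l' _ h
    have hy : ∃ i, y i ≠ 0 := by
      by_contra h'
      push_neg at h'
      rw [h' 0, h' 1] at hxy
      simp at hxy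
    obtain ⟨i, hyi⟩ := hy
    have h2 := congrFun (congrArg Prod.snd h) i
    simp only [Pi.sub_apply, Pi.smul_apply, smul_eq_mul] at h2
    have : (l : k) = (l' : k) := by
      have h3 : ((l : k) - l') * y i = 0 := by linear_combination -h2
      rcases mul_eq_zero.mp h3 with h2 | h2
      · exact sub_eq_zero.mp h2
      · exact absurd h2 hyi
    exact Units.ext this
  · rintro p ⟨l, hp⟩
    exact ⟨l, Set.mem_univ l, ((key l p).mp hp).symm⟩
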